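/- Let y' ∈ S^{p-1}, y'' ∈ S^{q-1} and let A₃ (q×p), A₄ (q×q) satisfy A₄A₄ᵀ − A₃A₃ᵀ = I, with eigenvalues λ₁ ≥ ⋯ ≥ λ_q ≥ 1 of A₄ᵀA₄ and μᵢ = λᵢ − 1 the nonzero eigenvalues of A₃ᵀA₃. Then |A₃y' + A₄y''| ≥ min_i(√λᵢ − √(λᵢ − 1)). -/

import Mathlib

open Matrix

private lemma s19_quad (A C X Y : ℝ) (hA : 0 ≤ A) (hC : 0 ≤ C) (hAC : 1 ≤ A * C) :
    0 ≤ A * X ^ 2 + 2 * X * Y + C * Y ^ 2 := by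
  have hA' : 0 < A := by nlinarith
  have h1 : 0 ≤ A * (A * X ^ 2 + 2 * X * Y + C * Y ^ 2) := by
    nlinarith [sq_nonneg (A * X + Y), sq_nonneg Y]
  exact nonneg_of_mul_nonneg_right (by linarith [h1]) hA'

private lemma s19_key (L ν X Y : ℝ) (hL : 1 ≤ L) (hν : 1 ≤ ν) (hνL : ν ≤ L)
    (hY : Y ^ 2 ≤ ν - 1) :
    (Real.sqrt L - Real.sqrt (L - 1)) * Real.sqrt L * (X ^ 2 / ν)
      - (Real.sqrt L - Real.sqrt (L - 1)) * Real.sqrt (L - 1) * (Y ^ 2 / (ν - 1))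
      ≤ (X + Y) ^ 2 := by
  set a := Real.sqrt L with ha
  set m := Real.sqrt (L - 1) with hm
  have ha2 : a ^ 2 = L := Real.sq_sqrt (by linarith)
  have hm2 : m ^ 2 = L - 1 := Real.sq_sqrt (by linarith)
  have ha0 : 0 ≤ a := Real.sqrt_nonneg _
  have hm0 : 0 ≤ m := Real.sqrt_nonneg _
  have hma : m ≤ a := Real.sqrt_le_sqrt (by linarith)
  have hc0 : 0 ≤ a - m := by linarith
  have hα1 : (a - m) * a ≤ 1 := by nlinarith
  rcases eq_or_lt_of_le hν with hν1 | hν1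
  · have hY0 : Y = 0 := by nlinarith [sq_nonneg Y]
    rw [← hν1, hY0]
    simp only [sub_self, div_zero, mul_zero, sub_zero, div_one, add_zero]
    nlinarith [sq_nonneg X]
  · have hμ : (0:ℝ) < ν - 1 := by linarith
    have hν0 : (0:ℝ) < ν := by linarith
    set A := 1 - (a - m) * a / ν with hA
    set C := 1 + (a - m) * m / (ν - 1) with hC
    have hA0 : 0 ≤ A := by
      rw [hA, sub_nonneg, div_le_one hν0]; nlinarith
    have hC0 : 0 ≤ C := by
      have h' : 0 ≤ (a - m) * m / (ν - 1) := div_nonneg (mul_nonneg hc0 hm0) (le_of_lt hμ)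
      rw [hC]; linarith
    have hid : (ν - (a - m) * a) * ((ν - 1) + (a - m) * m) - ν * (ν - 1)
        = (a - m) ^ 2 * (a ^ 2 - ν) := by
      linear_combination (-((a - m) * a)) * ha2 + ((a - m) * a) * hm2
    have key : ν * (ν - 1) ≤ (ν - (a - m) * a) * ((ν - 1) + (a - m) * m) := by
      nlinarith [sq_nonneg (a - m)]
    have hACeq : A * C = ((ν - (a - m) * a) * ((ν - 1) + (a - m) * m)) / (ν * (ν - 1)) := by
      rw [hA, hC]; field_simp
    have hAC : 1 ≤ A * C := by
      rw [hACeq, le_div_iff₀ (by positivity)]; linarith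
    have hq := s19_quad A C X Y hA0 hC0 hAC
    have expand : A * X ^ 2 + 2 * X * Y + C * Y ^ 2
        = (X + Y) ^ 2 - ((a - m) * a * (X ^ 2 / ν) - (a - m) * m * (Y ^ 2 / (ν - 1))) := by
      rw [hA, hC]; field_simp; ring
    rw [expand] at hq
    linarith

private lemma s19_eval_charpoly {q : ℕ} (M : Matrix (Fin q) (Fin q) ℝ) (t : ℝ) :
    M.charpoly.eval t = (t • (1 : Matrix (Fin q) (Fin q) ℝ) - M).det := by
  have h := RingHom.map_det (Polynomial.evalRingHom t) (charmatrix M)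
  rw [Matrix.charpoly]
  rw [show Polynomial.eval t (charmatrix M).det = _ from h]
  congr 1
  ext i j
  by_cases hij : i = j <;>
    simp [charmatrix_apply, Matrix.one_apply, hij, Matrix.diagonal_apply]

/-- If `A₄A₄ᵀ - A₃A₃ᵀ = I` and `A₄ᵀA₄` has eigenvalues
`λ₁ ≥ ⋯ ≥ λ_q ≥ 1` (counted via the characteristic polynomial), then for all unit
vectors `y'`, `y''`, `|A₃y' + A₄y''| ≥ min_i (√λᵢ - √(λᵢ-1))`. -/
theorem stmt_19 (p q : ℕ) (hq : 0 < q)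
    (A₃ : Matrix (Fin q) (Fin p) ℝ) (A₄ : Matrix (Fin q) (Fin q) ℝ)
    (h : A₄ * A₄ᵀ - A₃ * A₃ᵀ = 1)
    (lam : Fin q → ℝ)
    (hmono : ∀ i j : Fin q, i ≤ j → lam j ≤ lam i)
    (hge : ∀ i, 1 ≤ lam i)
    (hchar : (A₄ᵀ * A₄).charpoly = ∏ i, (Polynomial.X - Polynomial.C (lam i)))
    (y' : Fin p → ℝ) (y'' : Fin q → ℝ)
    (hy' : ∑ i, y' i ^ 2 = 1) (hy'' : ∑ i, y'' i ^ 2 = 1) :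
    Real.sqrt (∑ i, (A₃.mulVec y' + A₄.mulVec y'') i ^ 2) ≥
      ⨅ i : Fin q, (Real.sqrt (lam i) - Real.sqrt (lam i - 1)) := by
  classical
  set i0 : Fin q := ⟨0, hq⟩ with hi0def
  set L := lam i0 with hLdef
  have hL1 : (1:ℝ) ≤ L := hge i0
  set c := Real.sqrt L - Real.sqrt (L - 1) with hcdef
  have hc0 : 0 ≤ c := sub_nonneg.2 (Real.sqrt_le_sqrt (by linarith))
  have hinf : (⨅ i : Fin q, (Real.sqrt (lam i) - Real.sqrt (lam i - 1))) ≤ c :=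
    ciInf_le (Finite.bddBelow_range _) i0
  -- matrices setup
  set B := A₄ * A₄ᵀ with hBdef
  have hBH : B.IsHermitian := by
    show Bᴴ = B
    ext i j
    simp only [hBdef, Matrix.conjTranspose_apply, Matrix.mul_apply, Matrix.transpose_apply,
      star_trivial]
    exact Finset.sum_congr rfl fun k _ => mul_comm _ _
  have hBT : Bᵀ = B := by
    ext i j
    simp only [hBdef, Matrix.transpose_apply, Matrix.mul_apply, Matrix.transpose_apply]
    exact Finset.sum_congr rfl fun k _ => mul_comm _ _
  have h3 : A₃ * A₃ᵀ = B - 1 := by rw [← h, sub_sub_cancel]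
  have hBeq : B = 1 + A₃ * A₃ᵀ := by rw [h3, add_sub_cancel]
  -- spectral data
  set ν : Fin q → ℝ := hBH.eigenvalues with hν
  set b : Fin q → (Fin q → ℝ) := fun i => ⇑(hBH.eigenvectorBasis i) with hb
  have hBb : ∀ i, B *ᵥ b i = ν i • b i := fun i => hBH.mulVec_eigenvectorBasis i
  have hdot : ∀ x y : EuclideanSpace ℝ (Fin q), (inner ℝ x y : ℝ) = (⇑x) ⬝ᵥ (⇑y) := by
    intro x y
    simp [PiLp.inner_apply, dotProduct, RCLike.inner_apply, mul_comm]
  have honB : ∀ i j, b i ⬝ᵥ b j = if i = j then 1 else 0 := by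
    intro i j
    have h1 := orthonormal_iff_ite.mp hBH.eigenvectorBasis.orthonormal i j
    rw [hdot] at h1
    exact h1
  have hparse : ∀ v z : Fin q → ℝ, v ⬝ᵥ z = ∑ i, (b i ⬝ᵥ v) * (b i ⬝ᵥ z) := by
    intro v z
    have h1 := OrthonormalBasis.sum_inner_mul_inner (𝕜 := ℝ) hBH.eigenvectorBasis (WithLp.toLp 2 v) (WithLp.toLp 2 z)
    simp only [hdot, WithLp.ofLp_toLp] at h1
    have h2 : (∑ i, (v ⬝ᵥ b i) * (b i ⬝ᵥ z)) = ∑ i, (b i ⬝ᵥ v) * (b i ⬝ᵥ z) :=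
      Finset.sum_congr rfl fun i _ => by rw [dotProduct_comm]
    exact h1.symm.trans h2
  have hcB : ∀ (i : Fin q) (v : Fin q → ℝ), b i ⬝ᵥ (B *ᵥ v) = ν i * (b i ⬝ᵥ v) := by
    intro i v
    rw [dotProduct_mulVec, ← Matrix.mulVec_transpose, hBT, hBb i, smul_dotProduct, smul_eq_mul]
  have hbb : ∀ i, b i ⬝ᵥ b i = 1 := fun i => by rw [honB i i, if_pos rfl]
  have hselfdot : ∀ {n : ℕ} (z : Fin n → ℝ), 0 ≤ z ⬝ᵥ z := by
    intro n z
    exact Finset.sum_nonneg fun k _ => mul_self_nonneg _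
  have hdotMM : ∀ {m : ℕ} (M : Matrix (Fin q) (Fin m) ℝ) (x z : Fin q → ℝ),
      x ⬝ᵥ ((M * Mᵀ) *ᵥ z) = (Mᵀ *ᵥ x) ⬝ᵥ (Mᵀ *ᵥ z) := by
    intro m M x z
    rw [← mulVec_mulVec, dotProduct_mulVec, ← Matrix.mulVec_transpose]
  -- eigenvalues are ≥ 1
  have hν1 : ∀ i, 1 ≤ ν i := by
    intro i
    have e1 : b i ⬝ᵥ (B *ᵥ b i) = ν i := by rw [hcB, hbb, mul_one]
    have e2 : b i ⬝ᵥ (B *ᵥ b i) = b i ⬝ᵥ b i + (A₃ᵀ *ᵥ b i) ⬝ᵥ (A₃ᵀ *ᵥ b i) := by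
      rw [hBeq, add_mulVec, dotProduct_add, one_mulVec, hdotMM]
    have e3 : 0 ≤ (A₃ᵀ *ᵥ b i) ⬝ᵥ (A₃ᵀ *ᵥ b i) := hselfdot _
    rw [e2, hbb] at e1
    linarith
  -- eigenvalues are ≤ L
  have hνL : ∀ i, ν i ≤ L := by
    intro i
    have hvec : (ν i • 1 - B) *ᵥ b i = 0 := by
      rw [sub_mulVec, smul_mulVec, one_mulVec, hBb i, sub_self]
    have hbne : b i ≠ 0 := by
      intro h0
      have h1 := hbb i
      rw [h0] at h1
      simp [dotProduct] at h1
    have hdB : (ν i • (1 : Matrix (Fin q) (Fin q) ℝ) - B).det = 0 :=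
      (Matrix.exists_mulVec_eq_zero_iff).mp ⟨b i, hbne, hvec⟩
    have hνne : ν i ≠ 0 := by have := hν1 i; linarith
    have hsmul : ∀ (M N : Matrix (Fin q) (Fin q) ℝ),
        ν i • (1 : Matrix (Fin q) (Fin q) ℝ) - M * N = ν i • (1 - (ν i)⁻¹ • (M * N)) := by
      intro M N
      rw [smul_sub, smul_smul, mul_inv_cancel₀ hνne, one_smul]
    have htrans : (ν i • (1 : Matrix (Fin q) (Fin q) ℝ) - A₄ᵀ * A₄).det = 0 := by
      rw [hsmul A₄ᵀ A₄, Matrix.det_smul]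
      have e1 : (1 : Matrix (Fin q) (Fin q) ℝ) - (ν i)⁻¹ • (A₄ᵀ * A₄)
          = 1 - ((ν i)⁻¹ • A₄ᵀ) * A₄ := by rw [smul_mul_assoc]
      have e2 : (1 : Matrix (Fin q) (Fin q) ℝ) - A₄ * ((ν i)⁻¹ • A₄ᵀ)
          = 1 - (ν i)⁻¹ • (A₄ * A₄ᵀ) := by rw [mul_smul_comm]
      rw [e1, Matrix.det_one_sub_mul_comm, e2]
      have e3 : (ν i • (1 : Matrix (Fin q) (Fin q) ℝ) - A₄ * A₄ᵀ).det = 0 := by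
        rw [← hBdef]; exact hdB
      rw [hsmul A₄ A₄ᵀ, Matrix.det_smul] at e3
      have e4 : ((1 : Matrix (Fin q) (Fin q) ℝ) - (ν i)⁻¹ • (A₄ * A₄ᵀ)).det = 0 :=
        (mul_eq_zero.mp e3).resolve_left (by positivity)
      rw [e4, mul_zero]
    have h0 : Polynomial.eval (ν i) ((A₄ᵀ * A₄).charpoly) = 0 := by
      rw [s19_eval_charpoly]; exact htrans
    rw [hchar, Polynomial.eval_prod] at h0
    simp only [Polynomial.eval_sub, Polynomial.eval_X, Polynomial.eval_C] at h0
    obtain ⟨j, -, hj⟩ := Finset.prod_eq_zero_iff.mp h0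
    have hij : ν i = lam j := by linarith [sub_eq_zero.mp hj]
    rw [hij, hLdef]
    exact hmono i0 j (by rw [Fin.le_def]; exact Nat.zero_le _)
  -- invertibility of A₄ᵀ
  have hdetB : 0 < B.det := by
    have hd := hBH.det_eq_prod_eigenvalues
    rw [hd]
    have : ∀ i : Fin q, (0:ℝ) < hBH.eigenvalues i := fun i => lt_of_lt_of_le one_pos (hν1 i)
    exact Finset.prod_pos fun i _ => by simpa using this i
  have hdetA4T : A₄ᵀ.det ≠ 0 := by
    rw [Matrix.det_transpose]
    intro h0
    have e : B.det = A₄.det * A₄.det := by rw [hBdef, Matrix.det_mul, Matrix.det_transpose]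
    rw [e, h0, mul_zero] at hdetB
    exact lt_irrefl _ hdetB
  set x : Fin q → ℝ := (A₄ᵀ)⁻¹ *ᵥ y'' with hxdef
  have hA4x : A₄ᵀ *ᵥ x = y'' := by
    rw [hxdef, mulVec_mulVec, Matrix.mul_nonsing_inv _ (isUnit_iff_ne_zero.mpr hdetA4T),
      one_mulVec]
  set u := A₄ *ᵥ y'' with hudef
  set w := A₃ *ᵥ y' with hwdef
  have hyy : y'' ⬝ᵥ y'' = 1 := by
    rw [← hy'']; exact Finset.sum_congr rfl fun i _ => (pow_two (y'' i)).symm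
  have hy'y' : y' ⬝ᵥ y' = 1 := by
    rw [← hy']; exact Finset.sum_congr rfl fun i _ => (pow_two (y' i)).symm
  set cu : Fin q → ℝ := fun i => b i ⬝ᵥ u with hcu
  set cw : Fin q → ℝ := fun i => b i ⬝ᵥ w with hcw
  set cx : Fin q → ℝ := fun i => b i ⬝ᵥ x with hcx
  -- ∑ cx·cu = 1
  have hxu : (∑ i, cx i * cu i) = 1 := by
    rw [← hparse x u, hudef, dotProduct_mulVec, ← Matrix.mulVec_transpose, hA4x, hyy]
  -- ∑ ν cx² = 1
  have hxBx : (∑ i, ν i * cx i ^ 2) = 1 := by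
    have e1 : x ⬝ᵥ (B *ᵥ x) = (A₄ᵀ *ᵥ x) ⬝ᵥ (A₄ᵀ *ᵥ x) := by rw [hBdef]; exact hdotMM A₄ x x
    have e2 : x ⬝ᵥ (B *ᵥ x) = ∑ i, cx i * (ν i * cx i) := by
      rw [hparse x (B *ᵥ x)]
      exact Finset.sum_congr rfl fun i _ => by rw [hcB]
    rw [hA4x, hyy] at e1
    rw [← e1, e2]
    exact Finset.sum_congr rfl fun i _ => by ring
  -- ∑ cu²/ν ≥ 1
  have hSu : 1 ≤ ∑ i, cu i ^ 2 / ν i := by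
    have hcs := Finset.sum_mul_sq_le_sq_mul_sq Finset.univ
      (fun i => Real.sqrt (ν i) * cx i) (fun i => cu i / Real.sqrt (ν i))
    have hsν : ∀ i : Fin q, Real.sqrt (ν i) ^ 2 = ν i := fun i =>
      Real.sq_sqrt (by linarith [hν1 i])
    have hsνne : ∀ i : Fin q, Real.sqrt (ν i) ≠ 0 := fun i => by
      have h1 : (1:ℝ) ≤ Real.sqrt (ν i) := by
        rw [show (1:ℝ) = Real.sqrt 1 by simp]
        exact Real.sqrt_le_sqrt (hν1 i)
      linarith
    have e1 : (∑ i, (Real.sqrt (ν i) * cx i) * (cu i / Real.sqrt (ν i))) = ∑ i, cx i * cu i := by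
      refine Finset.sum_congr rfl fun i _ => ?_
      calc Real.sqrt (ν i) * cx i * (cu i / Real.sqrt (ν i))
          = cx i * cu i * (Real.sqrt (ν i) / Real.sqrt (ν i)) := by ring
        _ = cx i * cu i := by rw [div_self (hsνne i), mul_one]
    have e2 : (∑ i, (Real.sqrt (ν i) * cx i) ^ 2) = ∑ i, ν i * cx i ^ 2 := by
      refine Finset.sum_congr rfl fun i _ => ?_
      rw [mul_pow, hsν]
    have e3 : (∑ i, (cu i / Real.sqrt (ν i)) ^ 2) = ∑ i, cu i ^ 2 / ν i := by
      refine Finset.sum_congr rfl fun i _ => ?_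
      rw [div_pow, hsν]
    rw [e1, e2, e3, hxu, hxBx, one_mul] at hcs
    linarith
  -- cw i ^ 2 ≤ ν i - 1
  have hcwsq : ∀ i, cw i ^ 2 ≤ ν i - 1 := by
    intro i
    have e1 : cw i = (A₃ᵀ *ᵥ b i) ⬝ᵥ y' := by
      show b i ⬝ᵥ w = _
      rw [hwdef, dotProduct_mulVec, ← Matrix.mulVec_transpose]
    have e2 : (A₃ᵀ *ᵥ b i) ⬝ᵥ (A₃ᵀ *ᵥ b i) = ν i - 1 := by
      rw [← hdotMM A₃ (b i) (b i), h3, sub_mulVec, dotProduct_sub, hcB, one_mulVec, hbb, mul_one]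
    have hcs := Finset.sum_mul_sq_le_sq_mul_sq Finset.univ (fun k => (A₃ᵀ *ᵥ b i) k) y'
    have e3 : (∑ k, (A₃ᵀ *ᵥ b i) k * y' k) = (A₃ᵀ *ᵥ b i) ⬝ᵥ y' := rfl
    have e4 : (∑ k, ((A₃ᵀ *ᵥ b i) k) ^ 2) = (A₃ᵀ *ᵥ b i) ⬝ᵥ (A₃ᵀ *ᵥ b i) :=
      Finset.sum_congr rfl fun k _ => pow_two _
    rw [e3, e4, e2, hy', mul_one] at hcs
    rw [e1]
    exact hcs
  -- S_w ≤ 1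
  set Sw := ∑ i, cw i ^ 2 / (ν i - 1) with hSwdef
  have hSw0 : 0 ≤ Sw :=
    Finset.sum_nonneg fun i _ => div_nonneg (sq_nonneg _) (by linarith [hν1 i])
  set x' : Fin q → ℝ := fun k => ∑ i, (cw i / (ν i - 1)) * b i k with hx'def
  have hbx' : ∀ j, b j ⬝ᵥ x' = cw j / (ν j - 1) := by
    intro j
    have e1 : b j ⬝ᵥ x' = ∑ i, (cw i / (ν i - 1)) * (b j ⬝ᵥ b i) := by
      simp only [dotProduct, hx'def, Finset.mul_sum]
      rw [Finset.sum_comm]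
      exact Finset.sum_congr rfl fun i _ => Finset.sum_congr rfl fun k _ => by ring
    rw [e1]
    rw [Finset.sum_eq_single j]
    · rw [honB, if_pos rfl, mul_one]
    · intro i _ hij
      rw [honB, if_neg (by exact fun hh => hij (hh ▸ rfl)), mul_zero]
    · intro hj; exact absurd (Finset.mem_univ j) hj
  have hcw0 : ∀ i, ν i - 1 = 0 → cw i = 0 := by
    intro i hi
    have := hcwsq i
    rw [hi] at this
    exact pow_eq_zero_iff (n := 2) (by norm_num) |>.mp (le_antisymm this (sq_nonneg _))
  have hx'w : x' ⬝ᵥ w = Sw := by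
    rw [hparse x' w, hSwdef]
    refine Finset.sum_congr rfl fun i _ => ?_
    rw [hbx']
    show cw i / (ν i - 1) * cw i = cw i ^ 2 / (ν i - 1)
    rw [div_mul_eq_mul_div, ← pow_two]
  have hx'Bx' : x' ⬝ᵥ ((B - 1) *ᵥ x') = Sw := by
    have e1 : ∀ i : Fin q, b i ⬝ᵥ ((B - 1) *ᵥ x') = (ν i - 1) * (b i ⬝ᵥ x') := by
      intro i
      rw [sub_mulVec, dotProduct_sub, hcB, one_mulVec, sub_mul, one_mul]
    rw [hparse x' ((B - 1) *ᵥ x'), hSwdef]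
    refine Finset.sum_congr rfl fun i _ => ?_
    rw [e1, hbx']
    by_cases hμ : ν i - 1 = 0
    · rw [hμ, hcw0 i hμ]; simp
    · field_simp [hμ]
  have hSw1 : Sw ≤ 1 := by
    have e1 : x' ⬝ᵥ w = (A₃ᵀ *ᵥ x') ⬝ᵥ y' := by
      rw [hwdef, dotProduct_mulVec, ← Matrix.mulVec_transpose]
    have e2 : (A₃ᵀ *ᵥ x') ⬝ᵥ (A₃ᵀ *ᵥ x') = Sw := by
      rw [← hdotMM A₃ x' x', h3, hx'Bx']
    have hcs := Finset.sum_mul_sq_le_sq_mul_sq Finset.univ (fun k => (A₃ᵀ *ᵥ x') k) y'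
    have e3 : (∑ k, (A₃ᵀ *ᵥ x') k * y' k) = (A₃ᵀ *ᵥ x') ⬝ᵥ y' := rfl
    have e4 : (∑ k, ((A₃ᵀ *ᵥ x') k) ^ 2) = (A₃ᵀ *ᵥ x') ⬝ᵥ (A₃ᵀ *ᵥ x') :=
      Finset.sum_congr rfl fun k _ => pow_two _
    rw [e3, e4, e2, hy', mul_one, ← e1, hx'w] at hcs
    nlinarith
  -- main estimate
  set s := A₃ *ᵥ y' + A₄ *ᵥ y'' with hsdef
  have hsum1 : (∑ k, s k ^ 2) = ∑ i, (cu i + cw i) ^ 2 := by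
    have e0 : (∑ k, s k ^ 2) = s ⬝ᵥ s :=
      Finset.sum_congr rfl fun k _ => pow_two _
    rw [e0, hparse s s]
    refine Finset.sum_congr rfl fun i _ => ?_
    have e1 : b i ⬝ᵥ s = cu i + cw i := by
      rw [hsdef, dotProduct_add]
      exact add_comm _ _
    rw [e1, pow_two]
  have hterm : ∀ i : Fin q,
      c * Real.sqrt L * (cu i ^ 2 / ν i) - c * Real.sqrt (L - 1) * (cw i ^ 2 / (ν i - 1))
        ≤ (cu i + cw i) ^ 2 := by
    intro i
    have := s19_key L (ν i) (cu i) (cw i) hL1 (hν1 i) (hνL i) (hcwsq i)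
    rw [hcdef]
    exact this
  have hsumineq : c * Real.sqrt L * (∑ i, cu i ^ 2 / ν i)
      - c * Real.sqrt (L - 1) * Sw ≤ ∑ i, (cu i + cw i) ^ 2 := by
    have := Finset.sum_le_sum (fun i (_ : i ∈ Finset.univ) => hterm i)
    calc c * Real.sqrt L * (∑ i, cu i ^ 2 / ν i) - c * Real.sqrt (L - 1) * Sw
        = ∑ i, (c * Real.sqrt L * (cu i ^ 2 / ν i)
            - c * Real.sqrt (L - 1) * (cw i ^ 2 / (ν i - 1))) := by
          rw [Finset.sum_sub_distrib, ← Finset.mul_sum, ← Finset.mul_sum, hSwdef]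
      _ ≤ ∑ i, (cu i + cw i) ^ 2 := this
  have hα0 : 0 ≤ c * Real.sqrt L := mul_nonneg hc0 (Real.sqrt_nonneg _)
  have hβ0 : 0 ≤ c * Real.sqrt (L - 1) := mul_nonneg hc0 (Real.sqrt_nonneg _)
  have hfinal : c ^ 2 ≤ ∑ k, s k ^ 2 := by
    have h1 : c * Real.sqrt L * 1 ≤ c * Real.sqrt L * (∑ i, cu i ^ 2 / ν i) :=
      mul_le_mul_of_nonneg_left hSu hα0
    have h2 : c * Real.sqrt (L - 1) * Sw ≤ c * Real.sqrt (L - 1) * 1 :=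
      mul_le_mul_of_nonneg_left hSw1 hβ0
    have h4 : c ^ 2 = c * Real.sqrt L - c * Real.sqrt (L - 1) := by
      rw [hcdef]; ring
    have h1' : c * Real.sqrt L ≤ c * Real.sqrt L * (∑ i, cu i ^ 2 / ν i) := by
      calc c * Real.sqrt L = c * Real.sqrt L * 1 := (mul_one _).symm
        _ ≤ _ := h1
    have h2' : c * Real.sqrt (L - 1) * Sw ≤ c * Real.sqrt (L - 1) :=
      le_of_le_of_eq h2 (mul_one _)
    rw [hsum1]
    calc c ^ 2 = c * Real.sqrt L - c * Real.sqrt (L - 1) := h4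
      _ ≤ c * Real.sqrt L * (∑ i, cu i ^ 2 / ν i) - c * Real.sqrt (L - 1) * Sw :=
          sub_le_sub h1' h2'
      _ ≤ ∑ i, (cu i + cw i) ^ 2 := hsumineq
  have hmain : c ≤ Real.sqrt (∑ k, s k ^ 2) :=
    Real.le_sqrt_of_sq_le hfinal
  exact le_trans hinf hmain
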